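/- Let A_n = (Σ, δ) be an output-stabilizing stateless protocol on the unidirectional n-ring. Then its round complexity satisfies R_n ≤ n·|Σ|. -/

import Mathlib

/-- A stateless protocol on the directed graph with node set `Fin n` and edge set
`E`, with label space `Λ`.  `react i` maps the current labeling (of which only
the values on `i`'s incoming edges may be used, per `react_local`) together with
`i`'s input bit to a new labeling (of which only the values on `i`'s outgoing
edges are ever read) together with an output bit. -/
structure StatelessProtocol (n : ℕ) (E : Finset (Fin n × Fin n)) (Λ : Type) where
  react : Fin n → ({e // e ∈ E} → Λ) → Bool → ({e // e ∈ E} → Λ) × Bool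
  react_local : ∀ (i : Fin n) (ℓ ℓ' : {e // e ∈ E} → Λ) (x : Bool),
      (∀ e : {e // e ∈ E}, e.1.2 = i → ℓ e = ℓ' e) → react i ℓ x = react i ℓ' x

namespace StatelessProtocol

variable {n : ℕ} {E : Finset (Fin n × Fin n)} {Λ : Type}

/-- `run P x σ ℓ0 t` is the labeling after `t` time steps of the run of `P` on
input `x` from initial labeling `ℓ0`, where `σ t` is the set of nodes activated
at time step `t + 1`. -/
def run (P : StatelessProtocol n E Λ) (x : Fin n → Bool) (σ : ℕ → Finset (Fin n))
    (ℓ0 : {e // e ∈ E} → Λ) : ℕ → {e // e ∈ E} → Λ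
  | 0 => ℓ0
  | t + 1 => fun e =>
      if e.1.1 ∈ σ t then (P.react e.1.1 (run P x σ ℓ0 t) (x e.1.1)).1 e
      else run P x σ ℓ0 t e

/-- A schedule is `r`-fair if every node is activated at least once in every
window of `r` consecutive time steps. -/
def Fair (σ : ℕ → Finset (Fin n)) (r : ℕ) : Prop :=
  ∀ (i : Fin n) (t : ℕ), ∃ s, t ≤ s ∧ s < t + r ∧ i ∈ σ s

/-- A labeling is stable for input `x` if every reaction function is at a fixed
point: each node's prescribed outgoing labels coincide with the current ones. -/
def Stable (P : StatelessProtocol n E Λ) (x : Fin n → Bool)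
    (ℓ : {e // e ∈ E} → Λ) : Prop :=
  ∀ e : {e // e ∈ E}, (P.react e.1.1 ℓ (x e.1.1)).1 e = ℓ e

/-- The labeling after `t` steps of the synchronous run (all nodes activated at
every step). -/
def syncRun (P : StatelessProtocol n E Λ) (x : Fin n → Bool)
    (ℓ0 : {e // e ∈ E} → Λ) : ℕ → {e // e ∈ E} → Λ :=
  P.run x (fun _ => Finset.univ) ℓ0

/-- The outputs at time step `t` of the synchronous run (the value at time `0`
is a dummy value). -/
def syncOut (P : StatelessProtocol n E Λ) (x : Fin n → Bool)
    (ℓ0 : {e // e ∈ E} → Λ) : ℕ → Fin n → Bool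
  | 0 => fun _ => false
  | t + 1 => fun i => (P.react i (P.syncRun x ℓ0 t) (x i)).2

/-- Output stabilization under the synchronous schedule. -/
def OutputStabilizing (P : StatelessProtocol n E Λ) : Prop :=
  ∀ x ℓ0, ∃ T, ∀ t, T ≤ t → P.syncOut x ℓ0 t = P.syncOut x ℓ0 T

/-- Label stabilization under the synchronous schedule. -/
def LabelStabilizing (P : StatelessProtocol n E Λ) : Prop :=
  ∀ x ℓ0, ∃ T, ∀ t, T ≤ t → P.syncRun x ℓ0 t = P.syncRun x ℓ0 T

/-- `P` computes `f` if on every input and from every initial labeling, every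
node's output sequence converges to `f x` under the synchronous schedule. -/
def Computes (P : StatelessProtocol n E Λ) (f : (Fin n → Bool) → Bool) : Prop :=
  ∀ x ℓ0, ∃ T, ∀ t, T ≤ t → ∀ i, P.syncOut x ℓ0 t i = f x

end StatelessProtocol

/-- The complete directed graph on `Fin n`. -/
def Kn (n : ℕ) : Finset (Fin n × Fin n) :=
  Finset.univ.filter (fun p => p.1 ≠ p.2)

/-- The unidirectional `n`-ring: edges `(i, i + 1 mod n)`. -/
def uniRing (n : ℕ) : Finset (Fin n × Fin n) :=
  Finset.image (fun i : Fin n => (i, ⟨((i : ℕ) + 1) % n, Nat.mod_lt _ i.pos⟩)) Finset.univ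

/-- The bidirectional `n`-ring: edges `(i, i ± 1 mod n)`. -/
def biRing (n : ℕ) : Finset (Fin n × Fin n) :=
  uniRing n ∪ (uniRing n).image (fun p => (p.2, p.1))

-- auxiliary development
section Aux
open StatelessProtocol
open Fin.NatCast Fin.CommRing

variable {n : ℕ} [NeZero n] {Λ : Type}

def enc (i : Fin n) : {e // e ∈ uniRing n} :=
  ⟨(i, i + 1), by
    simp only [uniRing, Finset.mem_image]
    refine ⟨i, Finset.mem_univ i, ?_⟩
    refine Prod.ext rfl (Fin.ext ?_)
    simp [Fin.add_def, Fin.val_one', Nat.add_mod]⟩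

lemma edge_eq (e : {e // e ∈ uniRing n}) : e = enc e.1.1 := by
  obtain ⟨i, -, hi⟩ := Finset.mem_image.mp e.2
  apply Subtype.ext
  rw [← hi]
  refine Prod.ext rfl (Fin.ext ?_)
  simp [enc, Fin.add_def, Fin.val_one', Nat.add_mod]

lemma edge_into (e : {e // e ∈ uniRing n}) (i : Fin n) (h : e.1.2 = i) :
    e = enc (i - 1) := by
  have he := edge_eq e
  have h2 : e.1.1 + 1 = i := by rw [he] at h; exact h
  have h3 : e.1.1 = i - 1 := eq_sub_of_add_eq h2
  rw [he, h3]

lemma react_const (P : StatelessProtocol n (uniRing n) Λ) (i : Fin n)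
    (ℓ : {e // e ∈ uniRing n} → Λ) (x : Bool) :
    P.react i ℓ x = P.react i (fun _ => ℓ (enc (i - 1))) x :=
  P.react_local i ℓ _ x (fun e he => by rw [edge_into e i he])

def gfun (P : StatelessProtocol n (uniRing n) Λ) (x : Fin n → Bool) (i : Fin n)
    (a : Λ) : Λ :=
  (P.react i (fun _ => a) (x i)).1 (enc i)

def Hfun (P : StatelessProtocol n (uniRing n) Λ) (x : Fin n → Bool) :
    ℕ → Fin n → Λ → Λ
  | 0, _ => id
  | k + 1, i => gfun P x i ∘ Hfun P x k (i - 1)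

lemma syncRun_succ (P : StatelessProtocol n (uniRing n) Λ) (x ℓ0) (t : ℕ) (i : Fin n) :
    P.syncRun x ℓ0 (t + 1) (enc i) = gfun P x i (P.syncRun x ℓ0 t (enc (i - 1))) := by
  simp only [syncRun, run, Finset.mem_univ, if_true]
  rw [show (enc i).1.1 = i from rfl, react_const]
  rfl

lemma syncOut_succ (P : StatelessProtocol n (uniRing n) Λ) (x ℓ0) (t : ℕ) (i : Fin n) :
    P.syncOut x ℓ0 (t + 1) i
      = (P.react i (fun _ => P.syncRun x ℓ0 t (enc (i - 1))) (x i)).2 := by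
  show (P.react i (P.syncRun x ℓ0 t) (x i)).2 = _
  rw [react_const]

lemma run_shift (P : StatelessProtocol n (uniRing n) Λ) (x ℓ0) (t : ℕ) (k : ℕ) :
    ∀ i : Fin n, P.syncRun x ℓ0 (t + k) (enc i)
      = Hfun P x k i (P.syncRun x ℓ0 t (enc (i - (k : Fin n)))) := by
  induction k with
  | zero => intro i; simp [Hfun]
  | succ k ih =>
    intro i
    have hfin : i - ((k + 1 : ℕ) : Fin n) = i - 1 - (k : Fin n) := by push_cast; ring
    rw [hfin]
    show P.syncRun x ℓ0 ((t + k) + 1) (enc i) = _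
    rw [syncRun_succ, ih (i - 1)]
    simp [Hfun]

lemma run_iterate (P : StatelessProtocol n (uniRing n) Λ) (x ℓ0) (t : ℕ) (i : Fin n) :
    ∀ m : ℕ, P.syncRun x ℓ0 (t + m * n) (enc i)
      = (Hfun P x n i)^[m] (P.syncRun x ℓ0 t (enc i)) := by
  intro m
  induction m with
  | zero => simp
  | succ m ih =>
    have h1 : t + (m + 1) * n = (t + m * n) + n := by ring
    rw [h1, run_shift P x ℓ0 (t + m * n) n i,
      show ((n : ℕ) : Fin n) = 0 from Fin.natCast_self n, sub_zero, ih,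
      Function.iterate_succ_apply']

lemma eventually_periodic {Λ : Type} [Fintype Λ] (f : Λ → Λ) (a : Λ) :
    ∃ p, 1 ≤ p ∧ ∀ k, Fintype.card Λ - 1 ≤ k → ∀ c, f^[k + c * p] a = f^[k] a := by
  have hni : ¬ Function.Injective (fun m : Fin (Fintype.card Λ + 1) => f^[(m : ℕ)] a) := by
    intro hinj
    have := Fintype.card_le_of_injective _ hinj
    simp at this
  rw [Function.not_injective_iff] at hni
  obtain ⟨m1, m2, heq, hne⟩ := hni
  obtain ⟨j, m, hjm, hmc, hj⟩ :
      ∃ j m : ℕ, j < m ∧ m ≤ Fintype.card Λ ∧ f^[j] a = f^[m] a := by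
    rcases lt_or_gt_of_ne hne with h | h
    · exact ⟨m1, m2, h, by have := m2.isLt; omega, heq⟩
    · exact ⟨m2, m1, h, by have := m1.isLt; omega, heq.symm⟩
  refine ⟨m - j, by omega, ?_⟩
  have step : ∀ k, Fintype.card Λ - 1 ≤ k → f^[k + (m - j)] a = f^[k] a := by
    intro k hk
    have h1 : k + (m - j) = (k - j) + m := by omega
    rw [h1, Function.iterate_add_apply, ← hj, ← Function.iterate_add_apply]
    congr 1
    omega
  intro k hk c
  induction c with
  | zero => simp
  | succ c ih =>
    have h1 : k + (c + 1) * (m - j) = (k + c * (m - j)) + (m - j) := by ring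
    rw [h1, step _ (hk.trans (Nat.le_add_right _ _)), ih]

end Aux

open StatelessProtocol in
/-- An output-stabilizing stateless protocol on the
unidirectional `n`-ring has round complexity at most `n * |Σ|`. -/
theorem uniRing_round_complexity_le
    {n : ℕ} {Λ : Type} [Fintype Λ] [Nonempty Λ]
    (P : StatelessProtocol n (uniRing n) Λ) (hP : P.OutputStabilizing) :
    ∀ x ℓ0, ∀ t, n * Fintype.card Λ ≤ t →
      P.syncOut x ℓ0 t = P.syncOut x ℓ0 (n * Fintype.card Λ) := by
  intro x ℓ0
  rcases Nat.eq_zero_or_pos n with hn | hn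
  · intro t ht
    funext i
    exact absurd i.isLt (by omega)
  · haveI : NeZero n := ⟨hn.ne'⟩
    have hL1 : 1 ≤ Fintype.card Λ := Fintype.card_pos
    obtain ⟨T, hT⟩ := hP x ℓ0
    have claim : ∀ t, n * Fintype.card Λ ≤ t →
        ∀ i, P.syncOut x ℓ0 t i = P.syncOut x ℓ0 T i := by
      intro t ht i
      have ht1 : 1 ≤ t := le_trans (Nat.mul_pos hn hL1) ht
      obtain ⟨s, rfl⟩ : ∃ s, t = s + 1 := ⟨t - 1, by omega⟩
      obtain ⟨k, t0, ht0, rfl⟩ : ∃ k t0, t0 < n ∧ s = t0 + k * n :=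
        ⟨s / n, s % n, Nat.mod_lt s hn, (Nat.mod_add_div' s n).symm⟩
      -- k ≥ card Λ - 1
      have hk : Fintype.card Λ - 1 ≤ k := by
        have h1 : n * Fintype.card Λ ≤ n * (k + 1) := by
          calc n * Fintype.card Λ ≤ t0 + k * n + 1 := ht
            _ ≤ k * n + n := by omega
            _ = n * (k + 1) := by ring
        have := Nat.le_of_mul_le_mul_left h1 hn
        omega
      obtain ⟨p, hp1, hper⟩ :=
        eventually_periodic (Hfun P x n (i - 1)) (P.syncRun x ℓ0 t0 (enc (i - 1)))
      have hlab : P.syncRun x ℓ0 (t0 + (k + T * p) * n) (enc (i - 1))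
          = P.syncRun x ℓ0 (t0 + k * n) (enc (i - 1)) := by
        rw [run_iterate, run_iterate]
        exact hper k hk T
      have hout : P.syncOut x ℓ0 (t0 + k * n + 1) i
          = P.syncOut x ℓ0 (t0 + (k + T * p) * n + 1) i := by
        rw [syncOut_succ, syncOut_succ, hlab]
      have hbig : T ≤ t0 + (k + T * p) * n + 1 := by
        have h1 : T ≤ T * p := Nat.le_mul_of_pos_right T hp1
        have h2 : T * p ≤ T * p * n := Nat.le_mul_of_pos_right _ hn
        have h3 : (k + T * p) * n = k * n + T * p * n := by ring
        omega
      rw [hout]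
      exact congrFun (hT _ hbig) i
    intro t ht
    funext i
    rw [claim t ht i, claim (n * Fintype.card Λ) le_rfl i]
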